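/- Let F be a finite field with n elements and R = M₂(F), and let G be the graph on the nontrivial idempotents of R with adjacency e ~ f iff e ≠ f and (ef = 0 or fe = 0). Then the Harary index of G, defined as the sum of 1/d(u,v) over all unordered pairs of distinct vertices, equals (1/4)(n² + n)(n² + 3n − 2). -/

import Mathlib

namespace Stmt19Aux

set_option linter.unusedSectionVars false

variable {F : Type*} [Field F] [DecidableEq F]

def vec (x : Option F) : F × F := x.elim (0, 1) (fun s => (1, s))

def cross (v w : F × F) : F := v.1 * w.2 - v.2 * w.1

def mat (u φ : F × F) : Matrix (Fin 2) (Fin 2) F :=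
  !![u.1 * φ.1, u.1 * φ.2; u.2 * φ.1, u.2 * φ.2]

def pphi (w : F × F) : F × F := (-w.2, w.1)

def Phi (p : Option F × Option F) : Matrix (Fin 2) (Fin 2) F :=
  (cross (vec p.2) (vec p.1))⁻¹ • mat (vec p.1) (pphi (vec p.2))

lemma cross_vec_eq_zero {x y : Option F} : cross (vec x) (vec y) = 0 ↔ x = y := by
  cases x <;> cases y <;> simp [vec, cross, sub_eq_zero, eq_comm]

lemma eq_zero_of_smul (c : F) (x y : Option F)
    (h : c • mat (vec x) (pphi (vec y)) = 0) : c = 0 := by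
  have h' : ∀ i j, c * mat (vec x) (pphi (vec y)) i j = 0 := by
    intro i j
    have := congr_fun (congr_fun h i) j
    simpa using this
  cases x <;> cases y
  · simpa [mat, vec, pphi] using h' 1 0
  · simpa [mat, vec, pphi] using h' 1 1
  · simpa [mat, vec, pphi] using h' 0 0
  · simpa [mat, vec, pphi] using h' 0 1

lemma mat_mul_mat (u φ u' φ' : F × F) :
    mat u φ * mat u' φ' = (φ.1 * u'.1 + φ.2 * u'.2) • mat u φ' := by
  ext i j
  fin_cases i <;> fin_cases j <;>
    simp [mat, Matrix.mul_apply, Fin.sum_univ_two] <;> ring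

lemma phi_dot (w u : F × F) : (pphi w).1 * u.1 + (pphi w).2 * u.2 = cross w u := by
  simp [pphi, cross]; ring

lemma Phi_mul (p q : Option F × Option F) :
    Phi p * Phi q =
      ((cross (vec p.2) (vec p.1))⁻¹ * (cross (vec q.2) (vec q.1))⁻¹ *
        cross (vec p.2) (vec q.1)) • mat (vec p.1) (pphi (vec q.2)) := by
  rw [Phi, Phi, Matrix.smul_mul, Matrix.mul_smul, mat_mul_mat, phi_dot, smul_smul, smul_smul]

lemma Phi_mul_eq_zero_iff {p q : Option F × Option F} (hp : p.1 ≠ p.2) (hq : q.1 ≠ q.2) :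
    Phi p * Phi q = 0 ↔ q.1 = p.2 := by
  have h1 : cross (vec p.2) (vec p.1) ≠ 0 := fun h' => hp (cross_vec_eq_zero.mp h').symm
  have h2 : cross (vec q.2) (vec q.1) ≠ 0 := fun h' => hq (cross_vec_eq_zero.mp h').symm
  rw [Phi_mul]
  constructor
  · intro h
    have hc := eq_zero_of_smul _ _ _ h
    rcases mul_eq_zero.mp hc with h' | h'
    · rcases mul_eq_zero.mp h' with h'' | h''
      · exact absurd h'' (inv_ne_zero h1)
      · exact absurd h'' (inv_ne_zero h2)
    · exact (cross_vec_eq_zero.mp h').symm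
  · intro h
    rw [show cross (vec p.2) (vec q.1) = 0 from cross_vec_eq_zero.mpr h.symm]
    simp

lemma Phi_idem {p : Option F × Option F} (hp : p.1 ≠ p.2) : Phi p * Phi p = Phi p := by
  have h1 : cross (vec p.2) (vec p.1) ≠ 0 := fun h' => hp (cross_vec_eq_zero.mp h').symm
  rw [Phi_mul, Phi]
  congr 1
  field_simp

lemma Phi_trace {p : Option F × Option F} (hp : p.1 ≠ p.2) : Matrix.trace (Phi p) = 1 := by
  have h1 : cross (vec p.2) (vec p.1) ≠ 0 := fun h' => hp (cross_vec_eq_zero.mp h').symm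
  rw [Phi, Matrix.trace_smul]
  have h2 : Matrix.trace (mat (vec p.1) (pphi (vec p.2))) = cross (vec p.2) (vec p.1) := by
    simp [Matrix.trace_fin_two, mat, pphi, cross]; ring
  rw [h2, smul_eq_mul, inv_mul_cancel₀ h1]

lemma Phi_mem {p : Option F × Option F} (hp : p.1 ≠ p.2) :
    Phi p * Phi p = Phi p ∧ Phi p ≠ 0 ∧ Phi p ≠ (1 : Matrix (Fin 2) (Fin 2) F) := by
  refine ⟨Phi_idem hp, ?_, ?_⟩
  · intro h
    have ht := Phi_trace hp
    rw [h, Matrix.trace_zero] at ht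
    exact zero_ne_one ht
  · intro h
    have ht := Phi_trace hp
    rw [h, Matrix.trace_one] at ht
    norm_num at ht
    exact one_ne_zero (by linear_combination ht)

def other (x : Option F) : Option F := x.elim (some 0) (fun _ => none)

lemma other_ne (x : Option F) : other x ≠ x := by cases x <;> simp [other]

lemma Phi_inj {p q : Option F × Option F} (hp : p.1 ≠ p.2) (hq : q.1 ≠ q.2)
    (h : Phi p = Phi q) : p = q := by
  have hr1 : ((p.2, other p.2) : Option F × Option F).1 ≠ (p.2, other p.2).2 :=
    (other_ne p.2).symm
  have hr2 : ((other p.1, p.1) : Option F × Option F).1 ≠ (other p.1, p.1).2 :=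
    other_ne p.1
  have h1 : Phi p * Phi (p.2, other p.2) = 0 := (Phi_mul_eq_zero_iff hp hr1).mpr rfl
  rw [h] at h1
  have e2 : p.2 = q.2 := (Phi_mul_eq_zero_iff hq hr1).mp h1
  have h2 : Phi (other p.1, p.1) * Phi p = 0 := (Phi_mul_eq_zero_iff hr2 hp).mpr rfl
  rw [h] at h2
  have e1 : q.1 = p.1 := (Phi_mul_eq_zero_iff hr2 hq).mp h2
  exact Prod.ext e1.symm e2

lemma Phi_some_some (s t : F) :
    Phi ((some s, some t) : Option F × Option F)
      = (s - t)⁻¹ • !![-t, 1; -(s*t), s] := by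
  ext i j
  fin_cases i <;> fin_cases j <;>
    simp [Phi, vec, mat, pphi, cross, Matrix.smul_apply] <;> ring_nf

lemma exists_phi (A : Matrix (Fin 2) (Fin 2) F) (h1 : A * A = A) (h2 : A ≠ 0) (h3 : A ≠ 1) :
    ∃ p : Option F × Option F, p.1 ≠ p.2 ∧ Phi p = A := by
  have e00 : A 0 0 * A 0 0 + A 0 1 * A 1 0 = A 0 0 := by
    have := congr_fun (congr_fun h1 0) 0
    simpa [Matrix.mul_apply, Fin.sum_univ_two] using this
  have e01 : A 0 0 * A 0 1 + A 0 1 * A 1 1 = A 0 1 := by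
    have := congr_fun (congr_fun h1 0) 1
    simpa [Matrix.mul_apply, Fin.sum_univ_two] using this
  have e10 : A 1 0 * A 0 0 + A 1 1 * A 1 0 = A 1 0 := by
    have := congr_fun (congr_fun h1 1) 0
    simpa [Matrix.mul_apply, Fin.sum_univ_two] using this
  have e11 : A 1 0 * A 0 1 + A 1 1 * A 1 1 = A 1 1 := by
    have := congr_fun (congr_fun h1 1) 1
    simpa [Matrix.mul_apply, Fin.sum_univ_two] using this
  set a := A 0 0 with ha'
  set b := A 0 1 with hb'
  set c := A 1 0 with hc'
  set d := A 1 1 with hd'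
  have hA : A = !![a, b; c, d] := by
    rw [ha', hb', hc', hd']
    exact Matrix.etaExpand_eq A |>.symm
  by_cases htr : a + d = 1
  · by_cases hb : b = 0
    · have ha0 : a * (a - 1) = 0 := by rw [hb] at e00; linear_combination e00
      rcases mul_eq_zero.mp ha0 with h0 | h0
      · -- a = 0, d = 1
        have hd1 : d = 1 := by linear_combination htr - h0
        refine ⟨(none, some (-c)), by simp, ?_⟩
        rw [hA, h0, hb, hd1]
        ext i j
        fin_cases i <;> fin_cases j <;> simp [Phi, vec, mat, pphi, cross]
      · -- a = 1, d = 0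
        have ha1 : a = 1 := by linear_combination h0
        have hd0 : d = 0 := by linear_combination htr - h0
        refine ⟨(some c, none), by simp, ?_⟩
        rw [hA, ha1, hb, hd0]
        ext i j
        fin_cases i <;> fin_cases j <;> simp [Phi, vec, mat, pphi, cross] <;> norm_num
  
    · -- b ≠ 0
      have hbc : b * c = a * d := by linear_combination e00 - a * htr
      have hda : d + a = 1 := by linear_combination htr
      have hst : d * b⁻¹ - (-(a * b⁻¹)) = b⁻¹ := by
        rw [sub_neg_eq_add, ← add_mul, hda, one_mul]
      refine ⟨(some (d * b⁻¹), some (-(a * b⁻¹))), ?_, ?_⟩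
      · simp only [ne_eq, Prod.fst, Prod.snd, Option.some.injEq]
        intro h
        exact inv_ne_zero hb (by linear_combination h - b⁻¹ * htr)
      · rw [hA, Phi_some_some, hst, inv_inv]
        ext i j
        fin_cases i <;> fin_cases j <;> simp [Matrix.smul_apply] <;> field_simp <;>
          first
            | linear_combination b * hbc
            | linear_combination (-2*b) * hbc
            | linear_combination 2*b * hbc
            | linear_combination (-b) * hbc
            | linear_combination (b - 1) * hbc
            | linear_combination -hbc
  · -- a + d ≠ 1 : then A = 0 or 1, contradiction
    have hb : b = 0 := by
      have : b * (a + d - 1) = 0 := by linear_combination e01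
      rcases mul_eq_zero.mp this with h | h
      · exact h
      · exact absurd (by linear_combination h) htr
    have hc : c = 0 := by
      have : c * (a + d - 1) = 0 := by linear_combination e10
      rcases mul_eq_zero.mp this with h | h
      · exact h
      · exact absurd (by linear_combination h) htr
    have ha0 : a * (a - 1) = 0 := by rw [hb] at e00; linear_combination e00
    have hd0 : d * (d - 1) = 0 := by rw [hc] at e11; linear_combination e11
    exfalso
    rcases mul_eq_zero.mp ha0 with h0 | h0 <;> rcases mul_eq_zero.mp hd0 with h4 | h4
    · exact h2 (by rw [hA, hb, hc, h0, h4]; ext i j; fin_cases i <;> fin_cases j <;> simp)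
    · exact htr (by linear_combination h0 + h4)
    · exact htr (by linear_combination h0 + h4)
    · refine h3 ?_
      rw [hA, hb, hc, show a = 1 by linear_combination h0, show d = 1 by linear_combination h4]
      ext i j; fin_cases i <;> fin_cases j <;> simp [Matrix.one_apply]

section Counting

variable [Fintype F]

lemma sum_opt_ne (K : Option F) :
    ∑ y : Option F, (if K ≠ y then (1:ℚ) else 0) = (Fintype.card F : ℚ) := by
  have h : ∀ y : Option F, (if K ≠ y then (1:ℚ) else 0) = 1 - (if y = K then 1 else 0) := by
    intro y; by_cases h : y = K <;> simp [h, Ne.symm, eq_comm]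
  rw [Finset.sum_congr rfl fun y _ => h y, Finset.sum_sub_distrib]
  simp [Finset.sum_ite_eq', Finset.card_univ]

lemma sum_S_one :
    ∑ q : {p : Option F × Option F // p.1 ≠ p.2}, (1:ℚ)
      = ((Fintype.card F : ℚ) + 1) * (Fintype.card F : ℚ) := by
  rw [← Finset.sum_subtype
      (Finset.univ.filter (fun z : Option F × Option F => z.1 ≠ z.2)) (by simp)
      (fun _ => (1:ℚ))]
  rw [Finset.sum_filter, Fintype.sum_prod_type]
  rw [Finset.sum_congr rfl fun x _ => sum_opt_ne x]
  simp [Finset.sum_const, Finset.card_univ, mul_comm]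

lemma card_S :
    (Fintype.card {p : Option F × Option F // p.1 ≠ p.2} : ℚ)
      = ((Fintype.card F : ℚ) + 1) * (Fintype.card F : ℚ) := by
  rw [← sum_S_one]
  simp [Finset.card_univ]

lemma sum_S_deg (L K : Option F) (hLK : L ≠ K) :
    ∑ q : {p : Option F × Option F // p.1 ≠ p.2},
        (if (q.1.1 = K ∨ q.1.2 = L) then (1:ℚ) else 0)
      = 2 * (Fintype.card F : ℚ) - 1 := by
  rw [← Finset.sum_subtype
      (Finset.univ.filter (fun z : Option F × Option F => z.1 ≠ z.2)) (by simp)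
      (fun z => if (z.1 = K ∨ z.2 = L) then (1:ℚ) else 0)]
  rw [Finset.sum_filter, Fintype.sum_prod_type]
  have hx : ∀ x : Option F,
      (∑ y : Option F, if x ≠ y then (if (x = K ∨ y = L) then (1:ℚ) else 0) else 0)
        = (if x = K then (Fintype.card F : ℚ) - 1 else 0) + (if x = L then -1 else 0) + 1 := by
    intro x
    by_cases hK : x = K
    · have h : ∀ y : Option F,
          (if x ≠ y then (if (x = K ∨ y = L) then (1:ℚ) else 0) else 0)
            = (if x ≠ y then (1:ℚ) else 0) := by
        intro y; by_cases h : x = y <;> simp [h, hK]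
      rw [Finset.sum_congr rfl fun y _ => h y, sum_opt_ne]
      have hxL : x ≠ L := fun h => hLK (by rw [← h, ← hK])
      simp [hK, hxL, hLK, Ne.symm hLK]
      try ring
    · by_cases hL : x = L
      · have h : ∀ y : Option F,
            (if x ≠ y then (if (x = K ∨ y = L) then (1:ℚ) else 0) else 0) = 0 := by
          intro y
          by_cases h : x = y
          · simp [h]
          · have : y ≠ L := fun hy => h (hL.trans hy.symm)
            simp [h, hK, this]
        rw [Finset.sum_congr rfl fun y _ => h y]
        simp [hK, hL, hLK, Ne.symm hLK]
      · have h : ∀ y : Option F,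
            (if x ≠ y then (if (x = K ∨ y = L) then (1:ℚ) else 0) else 0)
              = (if y = L then (1:ℚ) else 0) := by
          intro y
          by_cases h : y = L
          · have : x ≠ y := fun hh => hL (hh.trans h)
            simp [hK, h, this, hL]
          · by_cases h2 : x = y <;> simp [h, h2, hK]
        rw [Finset.sum_congr rfl fun y _ => h y]
        simp [Finset.sum_ite_eq', hK, hL]
  rw [Finset.sum_congr rfl fun x _ => hx x]
  rw [Finset.sum_add_distrib, Finset.sum_add_distrib]
  have hne : L ≠ K := hLK
  simp [Finset.sum_ite_eq', Finset.sum_const, Finset.card_univ]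
  ring

end Counting

def toVert (p : {p : Option F × Option F // p.1 ≠ p.2}) :
    {A : Matrix (Fin 2) (Fin 2) F // A * A = A ∧ A ≠ 0 ∧ A ≠ 1} :=
  ⟨Phi p.1, Phi_mem p.2⟩

lemma toVert_bijective :
    Function.Bijective (toVert (F := F)) := by
  constructor
  · intro p q h
    exact Subtype.ext (Phi_inj p.2 q.2 (congrArg Subtype.val h))
  · intro A
    obtain ⟨p, hp1, hp2⟩ := exists_phi A.1 A.2.1 A.2.2.1 A.2.2.2
    exact ⟨⟨p, hp1⟩, Subtype.ext hp2⟩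

end Stmt19Aux
theorem stmt_19 (F : Type*) [Field F] [Fintype F] [DecidableEq F] (n : ℕ) (hn : Fintype.card F = n)
    (G : SimpleGraph {A : Matrix (Fin 2) (Fin 2) F // A * A = A ∧ A ≠ 0 ∧ A ≠ 1})
    (hG : ∀ e f, G.Adj e f ↔ e ≠ f ∧ ((e : Matrix (Fin 2) (Fin 2) F) * f = 0 ∨
      (f : Matrix (Fin 2) (Fin 2) F) * e = 0)) :
    (1 / 2 : ℚ) * ∑ u : {A : Matrix (Fin 2) (Fin 2) F // A * A = A ∧ A ≠ 0 ∧ A ≠ 1},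
        ∑ v : {A : Matrix (Fin 2) (Fin 2) F // A * A = A ∧ A ≠ 0 ∧ A ≠ 1},
          (if u = v then 0 else (G.dist u v : ℚ)⁻¹) =
      (1 / 4 : ℚ) * ((n : ℚ) ^ 2 + n) * ((n : ℚ) ^ 2 + 3 * n - 2) := by
  classical
  subst hn
  set n : ℕ := Fintype.card F with hn
  open Stmt19Aux in
  set S := {p : Option F × Option F // p.1 ≠ p.2} with hS
  let f := toVert (F := F)
  have hf := toVert_bijective (F := F)
  have hfval : ∀ p : S, (f p : Matrix (Fin 2) (Fin 2) F) = Stmt19Aux.Phi p.1 := fun p => rfl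
  -- key pointwise identity
  have key : ∀ p q : S,
      ((1/2 : ℚ) - (if q = p then (1/2:ℚ) else 0)
        + (if (q.1.1 = p.1.2 ∨ q.1.2 = p.1.1) then (1/2:ℚ) else 0))
      = (if f p = f q then (0:ℚ) else (G.dist (f p) (f q) : ℚ)⁻¹) := by
    intro p q
    by_cases hpq : p = q
    · subst hpq
      have hc : ¬(p.1.1 = p.1.2 ∨ p.1.2 = p.1.1) := by
        rcases p with ⟨⟨x, y⟩, hp⟩
        simp only at hp ⊢
        exact fun h => hp (h.elim id Eq.symm)
      simp [hc]
    · have hne : f p ≠ f q := fun h => hpq (hf.1 h)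
      rw [if_neg hne, if_neg (fun h : q = p => hpq h.symm)]
      by_cases hR : q.1.1 = p.1.2 ∨ q.1.2 = p.1.1
      · have hadj : G.Adj (f p) (f q) := by
          rw [hG]
          refine ⟨hne, ?_⟩
          rcases hR with h | h
          · exact Or.inl (by
              rw [hfval, hfval]
              exact (Stmt19Aux.Phi_mul_eq_zero_iff p.2 q.2).mpr h)
          · exact Or.inr (by
              rw [hfval, hfval]
              exact (Stmt19Aux.Phi_mul_eq_zero_iff q.2 p.2).mpr h.symm)
        have hd : G.dist (f p) (f q) = 1 := SimpleGraph.dist_eq_one_iff_adj.mpr hadj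
        rw [hd, if_pos hR]
        norm_num
      · have hnadj : ¬ G.Adj (f p) (f q) := by
          intro hadj
          rcases ((hG _ _).mp hadj).2 with h | h
          · rw [hfval, hfval] at h
            exact hR (Or.inl ((Stmt19Aux.Phi_mul_eq_zero_iff p.2 q.2).mp h))
          · rw [hfval, hfval] at h
            exact hR (Or.inr ((Stmt19Aux.Phi_mul_eq_zero_iff q.2 p.2).mp h).symm)
        have hg : p.1.2 ≠ q.1.1 := fun h => hR (Or.inl h.symm)
        set g : S := ⟨(p.1.2, q.1.1), hg⟩ with hgdef
        have a1 : G.Adj (f p) (f g) := by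
          rw [hG]
          constructor
          · intro h
            have := hf.1 h
            exact p.2 (by rw [hgdef] at this; exact congrArg (fun r => r.1.1) this)
          · exact Or.inl (by
              rw [hfval, hfval]
              exact (Stmt19Aux.Phi_mul_eq_zero_iff p.2 g.2).mpr rfl)
        have a2 : G.Adj (f g) (f q) := by
          rw [hG]
          constructor
          · intro h
            have := hf.1 h
            exact hg (by rw [hgdef] at this; exact (congrArg (fun r => r.1.1) this))
          · exact Or.inl (by
              rw [hfval, hfval]
              exact (Stmt19Aux.Phi_mul_eq_zero_iff g.2 q.2).mpr rfl)
        have hd : G.dist (f p) (f q) = 2 := by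
          have hle : G.dist (f p) (f q) ≤ 2 := by
            have := SimpleGraph.dist_le (a1.toWalk.append a2.toWalk)
            simpa using this
          have hpos : 0 < G.dist (f p) (f q) :=
            SimpleGraph.Reachable.pos_dist_of_ne ⟨a1.toWalk.append a2.toWalk⟩ hne
          have hone : G.dist (f p) (f q) ≠ 1 :=
            fun h => hnadj (SimpleGraph.dist_eq_one_iff_adj.mp h)
          omega
        rw [hd, if_neg hR]
        norm_num
  -- transfer the double sum
  have h2 : (∑ u : {A : Matrix (Fin 2) (Fin 2) F // A * A = A ∧ A ≠ 0 ∧ A ≠ 1},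
        ∑ v : {A : Matrix (Fin 2) (Fin 2) F // A * A = A ∧ A ≠ 0 ∧ A ≠ 1},
          (if u = v then (0:ℚ) else (G.dist u v : ℚ)⁻¹))
      = ∑ p : S, ∑ q : S,
          ((1/2 : ℚ) - (if q = p then (1/2:ℚ) else 0)
            + (if (q.1.1 = p.1.2 ∨ q.1.2 = p.1.1) then (1/2:ℚ) else 0)) := by
    refine (Fintype.sum_bijective f hf _ _ fun p => ?_).symm
    exact Fintype.sum_bijective f hf _ _ fun q => key p q
  rw [h2]
  -- compute inner sums
  have hinner : ∀ p : S,
      (∑ q : S, ((1/2 : ℚ) - (if q = p then (1/2:ℚ) else 0)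
        + (if (q.1.1 = p.1.2 ∨ q.1.2 = p.1.1) then (1/2:ℚ) else 0)))
      = (1/2) * (((n:ℚ)+1) * n) - 1/2 + (1/2) * (2 * (n:ℚ) - 1) := by
    intro p
    rw [Finset.sum_add_distrib, Finset.sum_sub_distrib]
    congr 1
    · congr 1
      · have : ∀ q : S, (1/2 : ℚ) = (1/2 : ℚ) * 1 := fun _ => by ring
        rw [Finset.sum_congr rfl fun q _ => this q, ← Finset.mul_sum,
          Stmt19Aux.sum_S_one]
      · rw [Finset.sum_eq_single p (fun b _ hb => by simp [hb]) (by simp)]; simp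
    · have : ∀ q : S, (if (q.1.1 = p.1.2 ∨ q.1.2 = p.1.1) then (1/2:ℚ) else 0)
          = (1/2 : ℚ) * (if (q.1.1 = p.1.2 ∨ q.1.2 = p.1.1) then (1:ℚ) else 0) := by
        intro q; by_cases h : (q.1.1 = p.1.2 ∨ q.1.2 = p.1.1) <;> simp [h]
      rw [Finset.sum_congr rfl fun q _ => this q, ← Finset.mul_sum,
        Stmt19Aux.sum_S_deg p.1.1 p.1.2 p.2]
  rw [Finset.sum_congr rfl fun p _ => hinner p]
  rw [Finset.sum_const, Finset.card_univ, nsmul_eq_mul, Stmt19Aux.card_S]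
  ring
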